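/- Let d ≥ 1 and let s₁, s₂ be points of the unit sphere 𝕊^d ⊂ ℝ^{d+1}. Then there exists a (d+1)×(d+1) real orthogonal matrix R with determinant 1 such that R s₁ ≠ s_n, R s₂ ≠ s_n (where R acts on ℝ^{d+1} by matrix–vector multiplication and s_n is the north pole), and arccos(⟨s₁, s₂⟩) = ‖h₁(φ(R s₁)) − h₁(φ(R s₂))‖. In particular, the great-circle distance arccos(⟨s₁, s₂⟩) is greater than or equal to the infimum over all orthogonal matrices R (with R s₁ ≠ s_n and R s₂ ≠ s_n) of ‖h₁(φ(R s₁)) − h₁(φ(R s₂))‖. -/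

import Mathlib

open Real
open scoped RealInnerProductSpace

noncomputable section

/-- The first `d` coordinates of a point of `ℝ^{d+1}`, i.e. `s[1:d]`. -/
def stereoProj {d : ℕ} (s : EuclideanSpace ℝ (Fin (d + 1))) : EuclideanSpace ℝ (Fin d) :=
  WithLp.toLp 2 (fun i => s (Fin.castSucc i))

/-- The stereographic projection `φ(s) = s[1:d] / (1 - s_{d+1})`. -/
def stereo {d : ℕ} (s : EuclideanSpace ℝ (Fin (d + 1))) : EuclideanSpace ℝ (Fin d) :=
  (1 - s (Fin.last d))⁻¹ • stereoProj s

open Classical in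
/-- The map `h₁(x) = arccos((1 - ‖x‖²)/(1 + ‖x‖²)) • x/‖x‖` for `x ≠ 0`, `h₁(0) = 0`. -/
def h1 {d : ℕ} (x : EuclideanSpace ℝ (Fin d)) : EuclideanSpace ℝ (Fin d) :=
  if x = 0 then 0 else Real.arccos ((1 - ‖x‖ ^ 2) / (1 + ‖x‖ ^ 2)) • ‖x‖⁻¹ • x

/-- The north pole `s_n = (0, …, 0, 1)` of `𝕊^d ⊂ ℝ^{d+1}`. -/
def northPole (d : ℕ) : EuclideanSpace ℝ (Fin (d + 1)) :=
  EuclideanSpace.single (Fin.last d) 1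

/-- The south pole `s₀ = (0, …, 0, -1)` of `𝕊^d ⊂ ℝ^{d+1}`. -/
def southPole (d : ℕ) : EuclideanSpace ℝ (Fin (d + 1)) :=
  EuclideanSpace.single (Fin.last d) (-1)

end

/-- The action of a matrix on a point of `ℝ^{d+1}` by matrix–vector multiplication. -/
noncomputable def matAct {d : ℕ} (R : Matrix (Fin (d + 1)) (Fin (d + 1)) ℝ)
    (s : EuclideanSpace ℝ (Fin (d + 1))) : EuclideanSpace ℝ (Fin (d + 1)) :=
  WithLp.toLp 2 (R.mulVec s)

section aux

lemma h1_neg {d : ℕ} (x : EuclideanSpace ℝ (Fin d)) : h1 (-x) = - h1 x := by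
  by_cases hx : x = 0
  · simp [hx, h1]
  · have hnx : -x ≠ 0 := by simpa [neg_eq_zero] using hx
    rw [h1, h1, if_neg hx, if_neg hnx, norm_neg]
    simp [smul_neg]

lemma norm_h1 {d : ℕ} (x : EuclideanSpace ℝ (Fin d)) (hx : x ≠ 0) :
    ‖h1 x‖ = Real.arccos ((1 - ‖x‖ ^ 2) / (1 + ‖x‖ ^ 2)) := by
  have hxn : ‖x‖ ≠ 0 := norm_ne_zero_iff.mpr hx
  rw [h1, if_neg hx, norm_smul, norm_smul, norm_inv, Real.norm_eq_abs, Real.norm_eq_abs,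
    abs_of_nonneg (Real.arccos_nonneg _), abs_norm, inv_mul_cancel₀ hxn, mul_one]

end aux
lemma basis_matrix_orth {n : ℕ} (b : OrthonormalBasis (Fin n) ℝ (EuclideanSpace ℝ (Fin n))) :
    (Matrix.of fun i j => b j i) ∈ Matrix.orthogonalGroup (Fin n) ℝ := by
  rw [Matrix.mem_orthogonalGroup_iff']
  have hon := b.orthonormal
  rw [orthonormal_iff_ite] at hon
  ext j k
  have h := hon j k
  simp only [PiLp.inner_apply, RCLike.inner_apply, starRingEnd_apply, star_trivial] at h
  simp only [Matrix.mul_apply, Matrix.star_eq_conjTranspose,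
    Matrix.conjTranspose_apply, Matrix.of_apply, star_trivial, Matrix.one_apply]
  rw [← h]
  simp only [Matrix.transpose_apply, Matrix.of_apply]
  exact Finset.sum_congr rfl fun x _ => mul_comm _ _

lemma exists_basis_at {n : ℕ} (u : EuclideanSpace ℝ (Fin (n+1))) (hu : ‖u‖ = 1) :
    ∃ b : OrthonormalBasis (Fin (n+1)) ℝ (EuclideanSpace ℝ (Fin (n+1))), b 0 = u := by
  have card : Module.finrank ℝ (EuclideanSpace ℝ (Fin (n+1))) = Fintype.card (Fin (n+1)) := by
    simp
  have hon : Orthonormal ℝ (({0} : Set (Fin (n+1))).restrict (fun _ => u)) := by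
    constructor
    · intro i; exact hu
    · intro i j hij
      exact absurd (Subsingleton.elim i j) hij
  obtain ⟨b, hb⟩ := Orthonormal.exists_orthonormalBasis_extension_of_card_eq card hon
  exact ⟨b, hb 0 rfl⟩

lemma exists_orth_map {n : ℕ} (u v : EuclideanSpace ℝ (Fin (n+1)))
    (hu : ‖u‖ = 1) (hv : ‖v‖ = 1) (j : Fin (n+1)) (hvj : v j = 0) :
    ∃ R : Matrix (Fin (n+1)) (Fin (n+1)) ℝ, R ∈ Matrix.orthogonalGroup (Fin (n+1)) ℝ ∧
      R.det = 1 ∧ R.mulVec u = v := by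
  obtain ⟨b, hb⟩ := exists_basis_at u hu
  obtain ⟨c, hc⟩ := exists_basis_at v hv
  set B : Matrix (Fin (n+1)) (Fin (n+1)) ℝ := Matrix.of fun i j => b j i with hB
  set C : Matrix (Fin (n+1)) (Fin (n+1)) ℝ := Matrix.of fun i j => c j i with hC
  have hBo := basis_matrix_orth b
  have hCo := basis_matrix_orth c
  have hBto : B.transpose ∈ Matrix.orthogonalGroup (Fin (n+1)) ℝ := by
    have := Unitary.star_mem hBo
    rwa [Matrix.star_eq_conjTranspose, Matrix.conjTranspose_eq_transpose_of_trivial] at this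
  set R₀ : Matrix (Fin (n+1)) (Fin (n+1)) ℝ := C * B.transpose with hR₀
  have hR₀o : R₀ ∈ Matrix.orthogonalGroup (Fin (n+1)) ℝ := mul_mem hCo hBto
  have hmul : R₀.mulVec u = v := by
    rw [hR₀, ← Matrix.mulVec_mulVec]
    have h1 : B.transpose.mulVec u = fun k => if k = 0 then 1 else 0 := by
      funext k
      have hbk := (orthonormal_iff_ite.mp b.orthonormal) k 0
      simp only [PiLp.inner_apply, RCLike.inner_apply, starRingEnd_apply, star_trivial] at hbk
      simp only [Matrix.mulVec, dotProduct, Matrix.transpose_apply, hB, Matrix.of_apply]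
      rw [← hb, ← hbk]
      exact Finset.sum_congr rfl fun x _ => mul_comm _ _
    rw [h1]
    funext i
    simp only [Matrix.mulVec, dotProduct, hC, Matrix.of_apply, mul_ite, mul_one, mul_zero]
    rw [Finset.sum_ite_eq' Finset.univ (0 : Fin (n+1)) (fun k => c k i)]
    simp [hc]
  have hdet : R₀.det = 1 ∨ R₀.det = -1 := by
    have h := hR₀o
    rw [Matrix.mem_orthogonalGroup_iff'] at h
    have : R₀.det * R₀.det = 1 := by
      have := congrArg Matrix.det h
      rwa [Matrix.det_mul, Matrix.det_transpose, Matrix.det_one] at this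
    exact mul_self_eq_one_iff.mp this
  rcases hdet with h1 | h1
  · exact ⟨R₀, hR₀o, h1, hmul⟩
  · set D : Matrix (Fin (n+1)) (Fin (n+1)) ℝ :=
      Matrix.diagonal (fun i => if i = j then -1 else 1) with hD
    have hDstar : star D = D := by
      rw [hD, Matrix.star_eq_conjTranspose, Matrix.conjTranspose_eq_transpose_of_trivial,
        Matrix.diagonal_transpose]
    have hDo : D ∈ Matrix.orthogonalGroup (Fin (n+1)) ℝ := by
      rw [Matrix.mem_orthogonalGroup_iff', ← Matrix.conjTranspose_eq_transpose_of_trivial,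
        ← Matrix.star_eq_conjTranspose, hDstar, hD, Matrix.diagonal_mul_diagonal]
      have hf : (fun i => (if i = j then (-1:ℝ) else 1) * (if i = j then -1 else 1)) =
          fun _ => (1:ℝ) := by
        funext i; by_cases h : i = j <;> simp [h]
      rw [hf, Matrix.diagonal_one]
    have hDdet : D.det = -1 := by
      rw [hD, Matrix.det_diagonal]
      rw [Finset.prod_ite_eq' Finset.univ j (fun _ => (-1:ℝ))]
      simp
    have hDv : D.mulVec v = v := by
      funext i
      rw [hD, Matrix.mulVec_diagonal]
      by_cases h : i = j
      · subst h; simp [hvj]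
      · simp [h]
    refine ⟨D * R₀, mul_mem hDo hR₀o, ?_, ?_⟩
    · rw [Matrix.det_mul, hDdet, h1]; ring
    · rw [← Matrix.mulVec_mulVec, hmul, hDv]
lemma sum_sq_split {d : ℕ} (t : EuclideanSpace ℝ (Fin (d + 1))) :
    ‖t‖ ^ 2 = ‖(stereoProj t : EuclideanSpace ℝ (Fin d))‖ ^ 2 + t (Fin.last d) ^ 2 := by
  have h1' : ‖t‖ ^ 2 = ∑ i : Fin (d+1), t i ^ 2 := by
    rw [EuclideanSpace.norm_eq, Real.sq_sqrt]
    · simp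
    · positivity
  have h2 : ‖(stereoProj t : EuclideanSpace ℝ (Fin d))‖ ^ 2 = ∑ i : Fin d, t (Fin.castSucc i) ^ 2 := by
    rw [EuclideanSpace.norm_eq, Real.sq_sqrt]
    · simp [stereoProj]
    · positivity
  rw [h1', h2, Fin.sum_univ_castSucc]

lemma norm_h1_stereo {d : ℕ} (t : EuclideanSpace ℝ (Fin (d + 1))) (ht : ‖t‖ = 1)
    (hL : t (Fin.last d) ≠ 1) :
    ‖h1 (stereo t)‖ = Real.arccos (- t (Fin.last d)) := by
  set L := t (Fin.last d) with hLdef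
  have hL1 : 1 - L ≠ 0 := by intro h; apply hL; linarith [sub_eq_zero.mp h]
  have hp : ‖(stereoProj t : EuclideanSpace ℝ (Fin d))‖ ^ 2 = 1 - L ^ 2 := by
    have := sum_sq_split t
    rw [ht] at this
    linarith
  have hx : ‖(stereo t : EuclideanSpace ℝ (Fin d))‖ ^ 2 = (1 + L) / (1 - L) := by
    rw [stereo, norm_smul, mul_pow, hp]
    rw [norm_inv, Real.norm_eq_abs, inv_pow, sq_abs]
    rw [← hLdef]
    have : (1 - L) ^ 2 ≠ 0 := pow_ne_zero 2 hL1
    field_simp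
    ring
  by_cases hx0 : (stereo t : EuclideanSpace ℝ (Fin d)) = 0
  · have hL2 : L = -1 := by
      rw [hx0, norm_zero] at hx
      have : (1 + L) = 0 := by
        field_simp at hx
        linarith
      linarith
    rw [h1, if_pos hx0, hL2]
    simp [Real.arccos_one]
  · have hxn : ‖(stereo t : EuclideanSpace ℝ (Fin d))‖ ≠ 0 := norm_ne_zero_iff.mpr hx0
    rw [h1, if_neg hx0]
    rw [norm_smul, norm_smul, norm_inv, Real.norm_eq_abs, Real.norm_eq_abs,
      abs_of_nonneg (Real.arccos_nonneg _), abs_norm]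
    rw [inv_mul_cancel₀ hxn, mul_one]
    congr 1
    rw [hx]
    have hpos : (0:ℝ) < 1 + (1 + L) / (1 - L) := by
      rw [← hx]; positivity
    field_simp
    ring
lemma inner_mulVec_orth {n : ℕ} {A : Matrix (Fin n) (Fin n) ℝ}
    (hA : A ∈ Matrix.orthogonalGroup (Fin n) ℝ) (x y : EuclideanSpace ℝ (Fin n)) :
    ⟪WithLp.toLp 2 (A.mulVec x), WithLp.toLp 2 (A.mulVec y)⟫ = ⟪x, y⟫ := by
  rw [Matrix.mem_orthogonalGroup_iff'] at hA
  have h : dotProduct (A.mulVec x) (A.mulVec y) = dotProduct x y := by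
    rw [Matrix.dotProduct_mulVec, Matrix.vecMul_mulVec]
    rw [hA, Matrix.vecMul_one]
  simpa [PiLp.inner_apply, dotProduct, mul_comm] using h

lemma norm_mulVec_orth {n : ℕ} {A : Matrix (Fin n) (Fin n) ℝ}
    (hA : A ∈ Matrix.orthogonalGroup (Fin n) ℝ) (x : EuclideanSpace ℝ (Fin n)) :
    ‖WithLp.toLp 2 (A.mulVec x)‖ = ‖x‖ := by
  have := inner_mulVec_orth hA x x
  rw [real_inner_self_eq_norm_sq, real_inner_self_eq_norm_sq] at this
  have h1 : (0:ℝ) ≤ ‖WithLp.toLp 2 (A.mulVec x)‖ := norm_nonneg _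
  nlinarith [norm_nonneg x]

lemma eq_northPole_of {d : ℕ} (t : EuclideanSpace ℝ (Fin (d+1))) (ht : ‖t‖ = 1)
    (hL : t (Fin.last d) = 1) : t = northPole d := by
  have hs := sum_sq_split t
  rw [ht, hL] at hs
  have hp : ‖(stereoProj t : EuclideanSpace ℝ (Fin d))‖ = 0 := by
    have h2 : ‖(stereoProj t : EuclideanSpace ℝ (Fin d))‖ ^ 2 = 0 := by linarith
    exact pow_eq_zero_iff (by norm_num) |>.mp h2
  have hp0 : (stereoProj t : EuclideanSpace ℝ (Fin d)) = 0 := norm_eq_zero.mp hp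
  ext i
  refine Fin.lastCases ?_ ?_ i
  · rw [hL, northPole, EuclideanSpace.single_apply, if_pos rfl]
  · intro j
    have : t (Fin.castSucc j) = 0 := by
      have := congrArg (fun w : EuclideanSpace ℝ (Fin d) => w j) hp0
      simpa [stereoProj] using this
    rw [this, northPole, EuclideanSpace.single_apply,
      if_neg (Fin.castSucc_lt_last j).ne]

lemma stereo_southPole {d : ℕ} : (stereo (southPole d) : EuclideanSpace ℝ (Fin d)) = 0 := by
  have hp : (stereoProj (southPole d) : EuclideanSpace ℝ (Fin d)) = 0 := by
    ext i
    simp only [stereoProj, PiLp.toLp_apply, southPole, EuclideanSpace.single_apply,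
      if_neg (Fin.castSucc_lt_last i).ne]
    rfl
  rw [stereo, hp, smul_zero]


/-- for `s₁, s₂ ∈ 𝕊^d` there is an orthogonal matrix `R` with `det R = 1`,
`R s₁ ≠ s_n`, `R s₂ ≠ s_n`, and `arccos ⟨s₁, s₂⟩ = ‖h₁(φ(R s₁)) - h₁(φ(R s₂))‖`; in
particular `arccos ⟨s₁, s₂⟩` is at least the infimum of these quantities over all
orthogonal matrices `R` with `R s₁ ≠ s_n` and `R s₂ ≠ s_n`. -/
theorem stmt4 {d : ℕ} (hd : 1 ≤ d) (s₁ s₂ : EuclideanSpace ℝ (Fin (d + 1)))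
    (hs₁ : ‖s₁‖ = 1) (hs₂ : ‖s₂‖ = 1) :
    (∃ R : Matrix (Fin (d + 1)) (Fin (d + 1)) ℝ,
      R ∈ Matrix.orthogonalGroup (Fin (d + 1)) ℝ ∧ R.det = 1 ∧
      matAct R s₁ ≠ northPole d ∧ matAct R s₂ ≠ northPole d ∧
      Real.arccos ⟪s₁, s₂⟫ = ‖h1 (stereo (matAct R s₁)) - h1 (stereo (matAct R s₂))‖) ∧
    sInf {r : ℝ | ∃ R : Matrix (Fin (d + 1)) (Fin (d + 1)) ℝ,
        R ∈ Matrix.orthogonalGroup (Fin (d + 1)) ℝ ∧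
        matAct R s₁ ≠ northPole d ∧ matAct R s₂ ≠ northPole d ∧
        r = ‖h1 (stereo (matAct R s₁)) - h1 (stereo (matAct R s₂))‖} ≤
      Real.arccos ⟪s₁, s₂⟫ := by
  have hlast0 : (Fin.last d) ≠ (0 : Fin (d+1)) := by
    intro h
    have := congrArg Fin.val h
    simp [Fin.last] at this
    omega
  have hmain : ∃ R : Matrix (Fin (d + 1)) (Fin (d + 1)) ℝ,
      R ∈ Matrix.orthogonalGroup (Fin (d + 1)) ℝ ∧ R.det = 1 ∧
      matAct R s₁ ≠ northPole d ∧ matAct R s₂ ≠ northPole d ∧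
      Real.arccos ⟪s₁, s₂⟫ = ‖h1 (stereo (matAct R s₁)) - h1 (stereo (matAct R s₂))‖ := by
    by_cases hanti : s₂ = -s₁
    · -- antipodal case: send s₁ to e₀
      set e₀ : EuclideanSpace ℝ (Fin (d+1)) := EuclideanSpace.single (0 : Fin (d+1)) 1 with he₀
      have he₀n : ‖e₀‖ = 1 := by rw [he₀, EuclideanSpace.norm_single]; norm_num
      have he₀last : e₀ (Fin.last d) = 0 := by
        rw [he₀, EuclideanSpace.single_apply, if_neg hlast0]
      obtain ⟨R, hRo, hRdet, hRu⟩ := exists_orth_map s₁ e₀ hs₁ he₀n (Fin.last d) he₀last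
      have hAct1 : matAct R s₁ = e₀ := by simp only [matAct, hRu, WithLp.toLp_ofLp]
      have hAct2 : matAct R s₂ = -e₀ := by
        simp [matAct, hanti, Matrix.mulVec_neg, hRu]
      have hN1 : matAct R s₁ ≠ northPole d := by
        rw [hAct1]
        intro h
        have : e₀ (Fin.last d) = (northPole d) (Fin.last d) := by rw [h]
        rw [he₀last] at this
        simp [northPole, EuclideanSpace.single_apply] at this
      have hN2 : matAct R s₂ ≠ northPole d := by
        rw [hAct2]
        intro h
        have : (-e₀ : EuclideanSpace ℝ (Fin (d+1))) (Fin.last d) = (northPole d) (Fin.last d) := by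
          rw [h]
        have h2 : (-e₀ : EuclideanSpace ℝ (Fin (d+1))) (Fin.last d) = 0 := by
          show -(e₀ (Fin.last d)) = 0
          rw [he₀last, neg_zero]
        rw [h2] at this
        simp [northPole, EuclideanSpace.single_apply] at this
      refine ⟨R, hRo, hRdet, hN1, hN2, ?_⟩
      have hinner : ⟪s₁, s₂⟫ = -1 := by
        rw [hanti, inner_neg_right, real_inner_self_eq_norm_sq, hs₁]
        norm_num
      rw [hinner, Real.arccos_neg_one]
      -- compute RHS
      set w : EuclideanSpace ℝ (Fin d) := stereoProj e₀ with hw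
      have hwn : ‖w‖ = 1 := by
        have := sum_sq_split e₀
        rw [he₀n, he₀last] at this
        have h2 : ‖w‖ ^ 2 = 1 := by rw [hw]; nlinarith
        nlinarith [norm_nonneg w]
      have hw0 : w ≠ 0 := by
        intro h; rw [h, norm_zero] at hwn; norm_num at hwn
      have hst1 : (stereo (matAct R s₁) : EuclideanSpace ℝ (Fin d)) = w := by
        rw [hAct1, stereo, he₀last, hw]
        norm_num
      have hst2 : (stereo (matAct R s₂) : EuclideanSpace ℝ (Fin d)) = -w := by
        rw [hAct2, stereo]
        have h2 : (-e₀ : EuclideanSpace ℝ (Fin (d+1))) (Fin.last d) = 0 := by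
          show -(e₀ (Fin.last d)) = 0
          rw [he₀last, neg_zero]
        rw [h2]
        have h3 : (stereoProj (-e₀) : EuclideanSpace ℝ (Fin d)) = -w := by
          ext i; rfl
        rw [h3]
        norm_num
      rw [hst1, hst2, h1_neg, sub_neg_eq_add, ← two_smul ℝ (h1 w), norm_smul]
      rw [norm_h1 w hw0, hwn]
      have harg : ((1:ℝ) - 1 ^ 2) / (1 + 1 ^ 2) = 0 := by norm_num
      rw [harg, Real.arccos_zero, Real.norm_eq_abs, abs_two]
      ring
    · -- generic case: send s₁ to the south pole
      have hsn : ‖southPole d‖ = 1 := by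
        rw [southPole, EuclideanSpace.norm_single]; norm_num
      have hs0 : (southPole d) (0 : Fin (d+1)) = 0 := by
        rw [southPole, EuclideanSpace.single_apply, if_neg (by exact fun h => hlast0 h.symm)]
      obtain ⟨R, hRo, hRdet, hRu⟩ := exists_orth_map s₁ (southPole d) hs₁ hsn 0 hs0
      have hAct1 : matAct R s₁ = southPole d := by simp only [matAct, hRu, WithLp.toLp_ofLp]
      have hnormRs₂ : ‖matAct R s₂‖ = 1 := by
        rw [matAct]
        rw [norm_mulVec_orth hRo, hs₂]
      have hinner12 : ⟪matAct R s₁, matAct R s₂⟫ = ⟪s₁, s₂⟫ := inner_mulVec_orth hRo s₁ s₂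
      have hsouthlast : (southPole d) (Fin.last d) = -1 := by
        rw [southPole, EuclideanSpace.single_apply, if_pos rfl]
      have hN1 : matAct R s₁ ≠ northPole d := by
        rw [hAct1]
        intro h
        have : (southPole d) (Fin.last d) = (northPole d) (Fin.last d) := by rw [h]
        rw [hsouthlast] at this
        simp [northPole, EuclideanSpace.single_apply] at this
        norm_num at this
      have hN2 : matAct R s₂ ≠ northPole d := by
        intro h
        have hin : ⟪s₁, s₂⟫ = -1 := by
          rw [← hinner12, hAct1, h, southPole, EuclideanSpace.inner_single_left]
          simp [northPole, EuclideanSpace.single_apply]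
        have hsum : ‖s₁ + s₂‖ ^ 2 = 0 := by
          rw [← real_inner_self_eq_norm_sq]
          rw [real_inner_add_add_self, real_inner_self_eq_norm_sq, real_inner_self_eq_norm_sq,
            hs₁, hs₂, hin]
          norm_num
        have : s₁ + s₂ = 0 := by
          have := pow_eq_zero_iff (n := 2) (by norm_num) |>.mp hsum
          exact norm_eq_zero.mp this
        exact hanti (eq_neg_of_add_eq_zero_right this)
      refine ⟨R, hRo, hRdet, hN1, hN2, ?_⟩
      have hlastne : (matAct R s₂) (Fin.last d) ≠ 1 := fun h =>
        hN2 (eq_northPole_of _ hnormRs₂ h)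
      rw [hAct1, stereo_southPole]
      have hh0 : (h1 (0 : EuclideanSpace ℝ (Fin d))) = 0 := by simp [h1]
      rw [hh0, zero_sub, norm_neg]
      rw [norm_h1_stereo (matAct R s₂) hnormRs₂ hlastne]
      congr 1
      rw [← hinner12, hAct1, southPole, EuclideanSpace.inner_single_left]
      simp
  refine ⟨hmain, ?_⟩
  obtain ⟨R, hRo, _, hN1, hN2, heq⟩ := hmain
  apply csInf_le
  · refine ⟨0, ?_⟩
    rintro r ⟨R', -, -, -, rfl⟩
    positivity
  · exact ⟨R, hRo, hN1, hN2, heq⟩
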